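/- arXiv:2301.02421 — 3 statements merged into one kernel-verified Lean document; each statement's English description precedes it below -/
import Mathlib

section
/- Let G be a digraph, s, t vertices with dist_G(s,t) < ∞, and let P be a simple directed s-to-t path with length(P) > dist_G(s,t). Let p be the smallest natural number such that at least two distinct vertices u of P satisfy dist_G(s,u) = p, and let x be the first vertex of P (in order along P) with dist_G(s,x) = p. Then the prefix subpath P[s→x] has length exactly p; that is, P[s→x] is a shortest s-to-x path in G. -/
variable {V : Type*}

/-- `w` is a directed walk from `u` to `v` in the digraph with arc relation `A`:
a nonempty list of vertices whose consecutive members are joined by arcs,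
starting at `u` and ending at `v`. -/
def IsDiWalk (A : V → V → Prop) (u v : V) (w : List V) : Prop :=
  w.Chain' A ∧ w.head? = some u ∧ w.getLast? = some v

/-- The length (number of arcs) of a walk represented as its list of vertices. -/
def walkLength (w : List V) : ℕ :=
  w.length - 1

/-- `w` is a simple directed path from `u` to `v`. -/
def IsDiPath (A : V → V → Prop) (u v : V) (w : List V) : Prop :=
  IsDiWalk A u v w ∧ w.Nodup

/-- Directed distance from `u` to `v`: the minimum length of a directed
`u`-to-`v` walk, or `⊤` if `v` is unreachable from `u`. -/
noncomputable def ddist (A : V → V → Prop) (u v : V) : ℕ∞ :=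
  ⨅ (w : List V) (_ : IsDiWalk A u v w), (walkLength w : ℕ∞)

/-- The internal (non-endpoint) vertices of a path represented as a list. -/
def internalVerts (w : List V) : List V :=
  w.tail.dropLast

/-- Two paths are internally vertex-disjoint if no internal vertex of either
lies on the other. -/
def InternallyDisjoint (w₁ w₂ : List V) : Prop :=
  (∀ a ∈ internalVerts w₁, a ∉ w₂) ∧ (∀ a ∈ internalVerts w₂, a ∉ w₁)

/-- All vertices of `w` lie in the induced subgraph `G_{≥p}` (with respect to
source `s`), i.e. have distance at least `p` from `s`. A path satisfying
`IsDiPath A x y w` together with `InGeq A s p w` is exactly a path of the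
induced subgraph of `G` on `{v : dist_G(s,v) ≥ p}`. -/
def InGeq (A : V → V → Prop) (s : V) (p : ℕ) (w : List V) : Prop :=
  ∀ a ∈ w, (p : ℕ∞) ≤ ddist A s a

lemma ddist_le_walkLength (A : V → V → Prop) {u v : V} {w : List V}
    (hw : IsDiWalk A u v w) : ddist A u v ≤ (walkLength w : ℕ∞) :=
  iInf₂_le w hw

lemma ddist_self (A : V → V → Prop) (s : V) : ddist A s s = 0 := by
  have h : IsDiWalk A s s [s] := by
    refine ⟨List.isChain_singleton _, by simp, by simp⟩
  have := ddist_le_walkLength A h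
  simpa [walkLength] using this

lemma exists_walk_of_ddist (A : V → V → Prop) {u v : V} {n : ℕ}
    (h : ddist A u v = (n : ℕ∞)) : ∃ w, IsDiWalk A u v w ∧ walkLength w = n := by
  have hlt : ddist A u v < (n : ℕ∞) + 1 := by
    rw [h]
    exact_mod_cast Nat.lt_succ_self n
  rw [ddist, iInf_lt_iff] at hlt
  obtain ⟨w, hw⟩ := hlt
  rw [iInf_lt_iff] at hw
  obtain ⟨hww, hlen⟩ := hw
  refine ⟨w, hww, ?_⟩
  have h1 : (walkLength w : ℕ∞) < (n : ℕ∞) + 1 := hlen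
  have h2 : (n : ℕ∞) ≤ (walkLength w : ℕ∞) := h ▸ ddist_le_walkLength A hww
  have : walkLength w < n + 1 := by exact_mod_cast h1
  have : n ≤ walkLength w := by exact_mod_cast h2
  omega

lemma ddist_step (A : V → V → Prop) {s u v : V} (huv : A u v) :
    ddist A s v ≤ ddist A s u + 1 := by
  rcases eq_or_ne (ddist A s u) ⊤ with h | h
  · simp [h]
  · obtain ⟨n, hn⟩ := WithTop.ne_top_iff_exists.1 h
    obtain ⟨w, hw, hwl⟩ := exists_walk_of_ddist A hn.symm
    have hne : w ≠ [] := by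
      intro hcon; rw [hcon] at hw; simp [IsDiWalk] at hw
    have hwalk : IsDiWalk A s v (w ++ [v]) := by
      refine ⟨hw.1.append (by simp) ?_, ?_, List.getLast?_concat⟩
      · intro a ha b hb
        simp at hb
        rw [hw.2.2] at ha
        simp at ha
        rw [← ha, ← hb]; exact huv
      · rw [List.head?_append, hw.2.1]; rfl
    have := ddist_le_walkLength A hwalk
    have hlen : walkLength (w ++ [v]) = n + 1 := by
      have : 1 ≤ w.length := List.length_pos_iff.2 hne
      simp [walkLength, List.length_append] at *
      omega
    rw [hlen] at this
    rw [← hn]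
    exact_mod_cast this

/-- for a non-shortest simple `s`-to-`t` path `P`, with `p` the
smallest index of a BFS layer containing at least two vertices of `P` and `x`
the first vertex of `P` in layer `p`, the prefix `P[s→x]` is a path from `s`
to `x` of length exactly `p`, i.e. a shortest `s`-to-`x` path. -/
theorem stmt4 [DecidableEq V] (A : V → V → Prop) (s t : V)
    (hfin : ddist A s t < ⊤) (P : List V) (hP : IsDiPath A s t P)
    (hlong : ddist A s t < (walkLength P : ℕ∞))
    (p : ℕ)
    (hp : ∃ u ∈ P, ∃ v ∈ P, u ≠ v ∧ ddist A s u = (p : ℕ∞) ∧ ddist A s v = (p : ℕ∞))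
    (hpmin : ∀ q : ℕ, q < p →
      ¬ ∃ u ∈ P, ∃ v ∈ P, u ≠ v ∧ ddist A s u = (q : ℕ∞) ∧ ddist A s v = (q : ℕ∞))
    (x : V) (hxP : x ∈ P) (hxp : ddist A s x = (p : ℕ∞))
    (hxfirst : ∀ z ∈ P.take (P.idxOf x), ddist A s z ≠ (p : ℕ∞)) :
    IsDiPath A s x (P.take (P.idxOf x + 1)) ∧
      walkLength (P.take (P.idxOf x + 1)) = p := by
  obtain ⟨⟨hchain, hhead, hlast⟩, hnodup⟩ := hP
  set k := P.idxOf x with hkdef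
  have hkP : k < P.length := List.idxOf_lt_length_iff.2 hxP
  have hPk : P[k] = x := List.getElem_idxOf hkP
  -- the prefix is a walk from s to x
  have hQlen : (P.take (k+1)).length = k + 1 := by
    simp [List.length_take]; omega
  have hQwalk : IsDiWalk A s x (P.take (k+1)) := by
    refine ⟨hchain.prefix (List.take_prefix _ _), ?_, ?_⟩
    · rw [← hhead]
      rcases P with _ | ⟨a, l⟩
      · simp at hkP
      · simp [List.take_succ_cons]
    · rw [List.getLast?_eq_getElem?, hQlen]
      simp only [Nat.add_sub_cancel]
      rw [List.getElem?_eq_getElem (by omega)]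
      rw [List.getElem_take]
      rw [hPk]
  have hQwalklen : walkLength (P.take (k+1)) = k := by
    simp [walkLength, hQlen]
  -- head of P is s
  have hP0 : P[0]'(by omega) = s := by
    rcases P with _ | ⟨a, l⟩
    · simp at hkP
    · simpa using hhead
  -- claim 1 : all vertices strictly before x have distance < p
  have claim1 : ∀ i, (hi : i < k) → ddist A s (P[i]'(hi.trans hkP)) < (p : ℕ∞) := by
    intro i
    induction i with
    | zero =>
      intro hi
      have hmem : P[0]'(by omega) ∈ P.take k := by
        have h0 : 0 < (P.take k).length := by simp [List.length_take]; omega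
        have : (P.take k)[0] = P[0]'(by omega) := List.getElem_take
        rw [← this]
        exact List.getElem_mem h0
      have hne := hxfirst _ hmem
      rw [hP0] at hne ⊢
      rw [ddist_self] at hne ⊢
      exact (zero_le (a := (p : ℕ∞))).lt_of_ne hne
    | succ i ih =>
      intro hi
      have hii : i < k := by omega
      have hlt := ih hii
      have harc : A (P[i]'(hii.trans hkP)) (P[i+1]'(hi.trans hkP)) := by
        have := List.isChain_iff_getElem.1 hchain i (by omega)
        simpa [List.get_eq_getElem] using this
      have hstep := ddist_step A (s := s) harc
      have hne : ddist A s (P[i]'(hii.trans hkP)) ≠ ⊤ := hlt.ne_top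
      have hle : ddist A s (P[i+1]'(hi.trans hkP)) ≤ (p : ℕ∞) := by
        refine hstep.trans ?_
        exact (ENat.add_one_le_iff hne).2 hlt
      have hmem : P[i+1]'(hi.trans hkP) ∈ P.take k := by
        have h0 : i+1 < (P.take k).length := by simp [List.length_take]; omega
        have : (P.take k)[i+1] = P[i+1]'(hi.trans hkP) := List.getElem_take
        rw [← this]
        exact List.getElem_mem h0
      exact hle.lt_of_ne (hxfirst _ hmem)
  -- p ≤ k
  have hpk : p ≤ k := by
    have := ddist_le_walkLength A hQwalk
    rw [hQwalklen, hxp] at this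
    exact_mod_cast this
  -- k ≤ p via injection Fin k → Fin p
  have hkp : k ≤ p := by
    have hf : ∀ i : Fin k, (ddist A s (P[i.1]'(i.2.trans hkP))).toNat < p := by
      intro i
      have h1 := claim1 i.1 i.2
      have h2 : ddist A s (P[i.1]'(i.2.trans hkP)) ≠ ⊤ := h1.ne_top
      have := ENat.coe_toNat h2
      rw [← this] at h1
      exact_mod_cast h1
    let f : Fin k → Fin p := fun i => ⟨(ddist A s (P[i.1]'(i.2.trans hkP))).toNat, hf i⟩
    have hinj : Function.Injective f := by
      intro i j hij
      by_contra hne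
      have hval : i.1 ≠ j.1 := fun h => hne (Fin.ext h)
      have hvne : P[i.1]'(i.2.trans hkP) ≠ P[j.1]'(j.2.trans hkP) := by
        intro h
        exact hval ((hnodup.getElem_inj_iff).1 h)
      have hd : (ddist A s (P[i.1]'(i.2.trans hkP))).toNat
          = (ddist A s (P[j.1]'(j.2.trans hkP))).toNat := by
        simpa [f, Fin.mk.injEq] using hij
      have hqi : ddist A s (P[i.1]'(i.2.trans hkP))
          = ((ddist A s (P[i.1]'(i.2.trans hkP))).toNat : ℕ∞) :=
        (ENat.coe_toNat (claim1 i.1 i.2).ne_top).symm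
      have hqj : ddist A s (P[j.1]'(j.2.trans hkP))
          = ((ddist A s (P[i.1]'(i.2.trans hkP))).toNat : ℕ∞) := by
        rw [hd]
        exact (ENat.coe_toNat (claim1 j.1 j.2).ne_top).symm
      exact hpmin _ (hf i) ⟨_, List.getElem_mem _, _, List.getElem_mem _, hvne, hqi, hqj⟩
    have := Fintype.card_le_of_injective f hinj
    simpa using this
  have hkp' : k = p := le_antisymm hkp hpk
  refine ⟨⟨hQwalk, hnodup.sublist (List.take_sublist _ _)⟩, by rw [hQwalklen, hkp']⟩
end

section
/- Let G be a digraph, s, t vertices with dist_G(s,t) < ∞, and let P be a simple directed s-to-t path with length(P) > dist_G(s,t). Let p be the smallest natural number such that at least two distinct vertices u of P satisfy dist_G(s,u) = p, and let x be the first vertex of P with dist_G(s,x) = p. Then every vertex w of P occurring at x or later along P satisfies dist_G(s,w) ≥ p. -/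
variable {V : Type*}

lemma exists_walk_le (A : V → V → Prop) (s u : V) (h : ddist A s u ≠ ⊤) :
    ∃ w, IsDiWalk A s u w ∧ (walkLength w : ℕ∞) ≤ ddist A s u := by
  by_contra h'
  push_neg at h'
  have : ddist A s u + 1 ≤ ddist A s u := by
    refine le_iInf₂ fun w hw => ?_
    have := h' w hw
    exact Order.add_one_le_of_lt this
  have hlt : ddist A s u < ddist A s u + 1 := (ENat.lt_add_one_iff h).2 le_rfl
  exact absurd (this.trans_lt hlt) (lt_irrefl _)

lemma ddist_le_succ (A : V → V → Prop) (s u v : V) (huv : A u v) :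
    ddist A s v ≤ ddist A s u + 1 := by
  rcases eq_or_ne (ddist A s u) ⊤ with h | h
  · simp [h]
  obtain ⟨w, hw, hlen⟩ := exists_walk_le A s u h
  have hne : w ≠ [] := by rintro rfl; simp [IsDiWalk] at hw
  have hwalk : IsDiWalk A s v (w ++ [v]) := by
    obtain ⟨hc, hh, hl⟩ := hw
    refine ⟨List.isChain_append.2 ⟨hc, List.isChain_singleton v, ?_⟩, ?_, ?_⟩
    · intro a ha b hb
      simp at hb; subst hb
      rw [hl] at ha; simp at ha; subst ha; exact huv
    · rwa [List.head?_append_of_ne_nil _ hne]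
    · simp
  have hlen2 : walkLength (w ++ [v]) = walkLength w + 1 := by
    have h1 : 1 ≤ w.length := List.length_pos_iff.2 hne
    simp only [walkLength, List.length_append, List.length_singleton]
    omega
  calc ddist A s v ≤ (walkLength (w ++ [v]) : ℕ∞) :=
        iInf₂_le (f := fun w (_ : IsDiWalk A s v w) => (walkLength w : ℕ∞)) _ hwalk
    _ = (walkLength w : ℕ∞) + 1 := by exact_mod_cast hlen2
    _ ≤ ddist A s u + 1 := by gcongr

lemma enat_ivt (f : ℕ → ℕ∞) (h0 : f 0 = 0) (n : ℕ)
    (hstep : ∀ k < n, f (k + 1) ≤ f k + 1) (m : ℕ) (hm : (m : ℕ∞) ≤ f n) :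
    ∃ k ≤ n, f k = (m : ℕ∞) := by
  induction n with
  | zero =>
    rw [h0] at hm
    have : m = 0 := by exact_mod_cast le_antisymm hm zero_le
    subst this
    exact ⟨0, le_refl _, by simp [h0]⟩
  | succ n ih =>
    rcases le_or_gt (m : ℕ∞) (f n) with h | h
    · obtain ⟨k, hk, hfk⟩ := ih (fun k hk => hstep k (by omega)) h
      exact ⟨k, by omega, hfk⟩
    · refine ⟨n + 1, le_refl _, le_antisymm ?_ hm⟩
      calc f (n + 1) ≤ f n + 1 := hstep n (by omega)
        _ ≤ (m : ℕ∞) := by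
          have : f n ≠ ⊤ := (h.trans_le le_top).ne  -- f n < m < ⊤
          exact Order.add_one_le_of_lt h


/-- for a non-shortest simple `s`-to-`t` path `P`, with `p` the
smallest index of a BFS layer containing at least two vertices of `P` and `x`
the first vertex of `P` in layer `p`, every vertex of `P` occurring at `x` or
later along `P` has distance at least `p` from `s`. -/
theorem stmt5 [DecidableEq V] (A : V → V → Prop) (s t : V)
    (hfin : ddist A s t < ⊤) (P : List V) (hP : IsDiPath A s t P)
    (hlong : ddist A s t < (walkLength P : ℕ∞))
    (p : ℕ)
    (hp : ∃ u ∈ P, ∃ v ∈ P, u ≠ v ∧ ddist A s u = (p : ℕ∞) ∧ ddist A s v = (p : ℕ∞))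
    (hpmin : ∀ q : ℕ, q < p →
      ¬ ∃ u ∈ P, ∃ v ∈ P, u ≠ v ∧ ddist A s u = (q : ℕ∞) ∧ ddist A s v = (q : ℕ∞))
    (x : V) (hxP : x ∈ P) (hxp : ddist A s x = (p : ℕ∞))
    (hxfirst : ∀ z ∈ P.take (P.idxOf x), ddist A s z ≠ (p : ℕ∞)) :
    ∀ w ∈ P.drop (P.idxOf x), (p : ℕ∞) ≤ ddist A s w := by
  
  obtain ⟨⟨hchain, hhead, hlast⟩, hnodup⟩ := hP
  intro w hw
  by_contra hcon
  push_neg at hcon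
  have hwtop : ddist A s w ≠ ⊤ := (hcon.trans_le le_top).ne
  lift ddist A s w to ℕ using hwtop with m hm
  have hmp : m < p := by exact_mod_cast hcon
  set i := P.idxOf x with hidef
  have hi : i < P.length := List.idxOf_lt_length_iff.2 hxP
  have hxget : P[i] = x := List.getElem_idxOf hi
  obtain ⟨a, ha, hwa⟩ := List.mem_iff_getElem.1 hw
  have hia : i + a < P.length := by
    rw [List.length_drop] at ha; omega
  have hwP : P[i + a] = w := by
    rw [← hwa, List.getElem_drop]
  -- the distance function along the path
  set f : ℕ → ℕ∞ := fun k => ddist A s (P.getD k x) with hfdef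
  have hne : P ≠ [] := List.ne_nil_of_length_pos (by omega)
  have hf0 : f 0 = 0 := by
    have h0 : P.getD 0 x = s := by
      rw [List.getD_eq_getElem _ _ (by omega), List.getElem_zero]
      rw [List.head?_eq_head hne] at hhead
      exact Option.some_injective _ hhead
    simp only [hfdef, h0, ddist_self]
  have hstep : ∀ k < i, f (k + 1) ≤ f k + 1 := by
    intro k hk
    have hk1 : k + 1 < P.length := by omega
    simp only [hfdef, List.getD_eq_getElem _ _ hk1, List.getD_eq_getElem _ _ (by omega : k < P.length)]
    have := List.isChain_iff_getElem.1 hchain k (by omega)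
    simpa using ddist_le_succ A s _ _ this
  have hfi : f i = (p : ℕ∞) := by
    simp only [hfdef, List.getD_eq_getElem _ _ hi, hxget, hxp]
  have hmi : (m : ℕ∞) ≤ f i := by
    rw [hfi]; exact_mod_cast hmp.le
  obtain ⟨k, hk, hfk⟩ := enat_ivt f hf0 i hstep m hmi
  have hki : k ≠ i := by
    rintro rfl
    rw [hfi] at hfk
    exact absurd (by exact_mod_cast hfk : p = m) (by omega)
  have hklt : k < P.length := by omega
  have hkgetD : P.getD k x = P[k] := List.getD_eq_getElem _ _ hklt
  have huw : P[k] ≠ w := by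
    rw [← hwP]
    intro hEq
    have := (List.Nodup.getElem_inj_iff hnodup).1 hEq
    omega
  exact hpmin m hmp ⟨P[k], List.getElem_mem _, w, List.drop_subset _ _ hw,
    huw, by rw [← hkgetD]; exact hfk, hm.symm⟩
end

section
/- Let G be a digraph, s, t vertices with dist_G(s,t) < ∞, and let P be a simple directed s-to-t path with length(P) > dist_G(s,t). Let p be the smallest natural number such that at least two distinct vertices of P lie in the layer L_p = {v : dist_G(s,v) = p}, and let x and y be, respectively, the first and second vertices of P lying in L_p. Then x ≠ y, the subpaths P[x→y] and P[y→t] are paths entirely contained in the induced subgraph G_{≥p} of G on {v : dist_G(s,v) ≥ p}, and P[x→y] and P[y→t] are internally vertex-disjoint. -/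
variable {V : Type*}

lemma ddist_le_walk (A : V → V → Prop) {u v : V} {w : List V} (h : IsDiWalk A u v w) :
    ddist A u v ≤ (walkLength w : ℕ∞) :=
  iInf₂_le w h

lemma exists_walk_ddist {A : V → V → Prop} {u v : V} {n : ℕ}
    (h : ddist A u v = (n : ℕ∞)) :
    ∃ w, IsDiWalk A u v w ∧ walkLength w = n := by
  have h1 : ddist A u v < (n : ℕ∞) + 1 := by
    rw [h]; exact_mod_cast Nat.lt_succ_self n
  rw [ddist, iInf_lt_iff] at h1
  obtain ⟨w, hw⟩ := h1
  rw [iInf_lt_iff] at hw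
  obtain ⟨hw1, hw2⟩ := hw
  refine ⟨w, hw1, le_antisymm ?_ ?_⟩
  · have := (Order.add_one_le_of_lt hw2)
    exact_mod_cast (by exact_mod_cast hw2 : (walkLength w : ℕ∞) < (n + 1 : ℕ)).le.trans_eq rfl
      |>.trans (le_refl _) |> fun h' => Nat.lt_succ_iff.mp (by exact_mod_cast hw2)
  · have h2 := ddist_le_walk A hw1
    rw [h] at h2
    exact_mod_cast h2

lemma ddist_le_of_arc {A : V → V → Prop} {s u v : V} (hA : A u v) :
    ddist A s v ≤ ddist A s u + 1 := by
  rcases eq_or_ne (ddist A s u) ⊤ with h | h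
  · simp [h]
  · lift ddist A s u to ℕ using h with n hn
    obtain ⟨w, hw, hl⟩ := exists_walk_ddist hn.symm
    obtain ⟨hc, hh, hg⟩ := hw
    have hwne : w ≠ [] := by intro he; simp [he] at hh
    have hchain : (w ++ [v]).Chain' A := by
      show List.IsChain A (w ++ [v])
      rw [List.isChain_append]
      refine ⟨hc, List.isChain_singleton v, ?_⟩
      intro a ha b hb
      simp at hb
      subst hb
      rw [hg] at ha
      simp at ha
      subst ha
      exact hA
    have hwalk : IsDiWalk A s v (w ++ [v]) := by
      refine ⟨hchain, ?_, List.getLast?_concat⟩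
      rw [List.head?_append_of_ne_nil _ hwne] -- guess
      exact hh
    have hlen : walkLength (w ++ [v]) = n + 1 := by
      have : w.length ≠ 0 := fun h0 => hwne (List.length_eq_zero_iff.mp h0)
      simp only [walkLength, List.length_append, List.length_singleton] at *
      omega
    have := ddist_le_walk A hwalk
    rw [hlen] at this
    exact this.trans_eq (by push_cast; rfl)

lemma ivtENat (f : ℕ → ℕ∞) (h0 : f 0 = 0) (hstep : ∀ k, f (k + 1) ≤ f k + 1) :
    ∀ (i : ℕ) (q : ℕ∞), q ≤ f i → ∃ a ≤ i, f a = q := by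
  intro i
  induction i with
  | zero =>
    intro q hq
    rw [h0] at hq
    exact ⟨0, le_rfl, by rw [h0, le_antisymm hq zero_le]⟩
  | succ i ih =>
    intro q hq
    by_cases h : q ≤ f i
    · obtain ⟨a, ha, hfa⟩ := ih q h
      exact ⟨a, ha.trans (Nat.le_succ i), hfa⟩
    · push_neg at h
      have h2 : q = f i + 1 := le_antisymm (hq.trans (hstep i)) (Order.add_one_le_of_lt h)
      exact ⟨i + 1, le_rfl, le_antisymm (h2 ▸ hstep i) hq⟩

lemma nodup_getElem_ne {P : List V} (hnd : P.Nodup) {k l : ℕ} (hk : k < P.length)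
    (hl : l < P.length) (hne : k ≠ l) : P[k] ≠ P[l] :=
  fun h => hne (hnd.getElem_inj_iff.mp h)

/-- for a non-shortest simple `s`-to-`t` path `P`, with `p` the
smallest index of a BFS layer containing at least two vertices of `P`, and `x`
and `y` the first and second vertices of `P` in layer `p`, we have `x ≠ y`,
the subpaths `P[x→y]` and `P[y→t]` are paths entirely contained in `G_{≥p}`,
and they are internally vertex-disjoint. -/
theorem stmt6 [DecidableEq V] (A : V → V → Prop) (s t : V)
    (hfin : ddist A s t < ⊤) (P : List V) (hP : IsDiPath A s t P)
    (hlong : ddist A s t < (walkLength P : ℕ∞))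
    (p : ℕ)
    (hp : ∃ u ∈ P, ∃ v ∈ P, u ≠ v ∧ ddist A s u = (p : ℕ∞) ∧ ddist A s v = (p : ℕ∞))
    (hpmin : ∀ q : ℕ, q < p →
      ¬ ∃ u ∈ P, ∃ v ∈ P, u ≠ v ∧ ddist A s u = (q : ℕ∞) ∧ ddist A s v = (q : ℕ∞))
    (x : V) (hxP : x ∈ P) (hxp : ddist A s x = (p : ℕ∞))
    (hxfirst : ∀ z ∈ P.take (P.idxOf x), ddist A s z ≠ (p : ℕ∞))
    (y : V) (hyP : y ∈ P) (hyp : ddist A s y = (p : ℕ∞))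
    (hxy : P.idxOf x < P.idxOf y)
    (hysecond : ∀ z ∈ P.take (P.idxOf y), z ≠ x → ddist A s z ≠ (p : ℕ∞)) :
    x ≠ y ∧
      IsDiPath A x y ((P.drop (P.idxOf x)).take (P.idxOf y - P.idxOf x + 1)) ∧
      InGeq A s p ((P.drop (P.idxOf x)).take (P.idxOf y - P.idxOf x + 1)) ∧
      IsDiPath A y t (P.drop (P.idxOf y)) ∧
      InGeq A s p (P.drop (P.idxOf y)) ∧
      InternallyDisjoint ((P.drop (P.idxOf x)).take (P.idxOf y - P.idxOf x + 1))
        (P.drop (P.idxOf y)) := by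
  obtain ⟨⟨hchain, hhead, hlast⟩, hnd⟩ := hP
  set i := P.idxOf x with hidef
  set j := P.idxOf y with hjdef
  have hiL : i < P.length := List.idxOf_lt_length_iff.2 hxP
  have hjL : j < P.length := List.idxOf_lt_length_iff.2 hyP
  have hgi : P[i] = x := List.getElem_idxOf hiL
  have hgj : P[j] = y := List.getElem_idxOf hjL
  have hPne : P ≠ [] := fun h => by simp [h] at hhead
  have hP0 : P[0]'(by omega) = s := by
    have h2 : P[0]? = some s := (List.head?_eq_getElem?).symm.trans hhead
    rw [List.getElem?_eq_getElem (by omega)] at h2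
    exact Option.some_injective _ h2
  -- distance along prefix walks
  have hprefix : ∀ k, (hk : k < P.length) → IsDiWalk A s P[k] (P.take (k + 1)) := by
    intro k hk
    refine ⟨hchain.prefix (List.take_prefix _ _), ?_, ?_⟩
    · rw [List.head?_eq_getElem?, List.getElem?_take_of_lt (by omega),
        ← List.head?_eq_getElem?, hhead]
    · rw [List.getLast?_eq_getElem?, List.length_take]
      have hmin : min (k + 1) P.length = k + 1 := by omega
      rw [hmin]
      simp only [Nat.add_sub_cancel]
      rw [List.getElem?_take_of_lt (by omega), List.getElem?_eq_getElem hk]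
  have hdk : ∀ k, (hk : k < P.length) → ddist A s P[k] ≤ (k : ℕ∞) := by
    intro k hk
    have h := ddist_le_walk A (hprefix k hk)
    have hl : walkLength (P.take (k + 1)) = k := by
      simp [walkLength, List.length_take]; omega
    rwa [hl] at h
  -- key claim: everything at index ≥ i has distance ≥ p
  have key : ∀ k, i ≤ k → (hk : k < P.length) → (p : ℕ∞) ≤ ddist A s P[k] := by
    intro k hik hk
    rcases eq_or_lt_of_le hik with heq | hlt
    · subst heq; rw [hgi, hxp]
    · by_contra hcon
      push_neg at hcon
      have hne_top : ddist A s P[k] ≠ ⊤ := (hcon.trans (by simp : (p:ℕ∞) < ⊤)).ne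
      lift ddist A s P[k] to ℕ using hne_top with q hq
      have hqp : q < p := by exact_mod_cast hcon
      -- auxiliary function for IVT
      set f : ℕ → ℕ∞ := fun m => ddist A s (P.getD (min m i) x) with hf
      have hgetD : ∀ m (h : m < P.length), P.getD m x = P[m]'h := fun m h =>
        List.getD_eq_getElem P x h
      have hf0 : f 0 = 0 := by
        rw [hf]
        simp only
        rw [Nat.min_eq_left (Nat.zero_le i), hgetD 0 (by omega), hP0, ddist_self]
      have hfstep : ∀ m, f (m + 1) ≤ f m + 1 := by
        intro m
        rcases lt_or_ge m i with hm | hm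
        · have h1 : min m i = m := by omega
          have h2 : min (m + 1) i = m + 1 := by omega
          rw [hf]
          simp only
          rw [h1, h2, hgetD m (by omega), hgetD (m+1) (by omega)]
          exact ddist_le_of_arc (List.isChain_iff_getElem.mp hchain m (by omega))
        · have h1 : min m i = i := by omega
          have h2 : min (m + 1) i = i := by omega
          rw [hf]; simp only [h1, h2]; exact le_self_add
      have hfi : f i = (p : ℕ∞) := by
        rw [hf]; simp only [min_self]
        rw [hgetD i hiL, hgi, hxp]
      obtain ⟨a, ha, hfa⟩ := ivtENat f hf0 hfstep i (q : ℕ∞) (by rw [hfi]; exact_mod_cast hqp.le)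
      rw [hf] at hfa
      simp only at hfa
      rw [Nat.min_eq_left ha, hgetD a (by omega)] at hfa
      have hane : P[a]'(by omega) ≠ P[k] := nodup_getElem_ne hnd (by omega) hk (by omega)
      exact hpmin q hqp ⟨P[a]'(by omega), List.getElem_mem _, P[k], List.getElem_mem _,
        hane, hfa, hq.symm⟩
  have hxney : x ≠ y := fun h => by rw [hidef, hjdef, h] at hxy; exact lt_irrefl _ hxy
  set Q := (P.drop i).take (j - i + 1) with hQdef
  set R := P.drop j with hRdef
  have hQinf : Q <:+: P := (List.take_prefix _ _).isInfix.trans (List.drop_suffix _ _).isInfix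
  have hRinf : R <:+: P := (List.drop_suffix _ _).isInfix
  have hQlen : Q.length = j - i + 1 := by
    rw [hQdef, List.length_take, List.length_drop]; omega
  have hRlen : R.length = P.length - j := by rw [hRdef, List.length_drop]
  have hQget : ∀ m, m < j - i + 1 → Q[m]? = P[i + m]? := by
    intro m hm
    rw [hQdef, List.getElem?_take_of_lt hm, List.getElem?_drop]
  have hRget : ∀ m, R[m]? = P[j + m]? := by
    intro m
    rw [hRdef, List.getElem?_drop]
  have hQgetE : ∀ m, (hm : m < j - i + 1) → Q[m]'(by omega) = P[i + m]'(by omega) := by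
    intro m hm
    have h1 := hQget m hm
    rw [List.getElem?_eq_getElem (by omega), List.getElem?_eq_getElem (by omega)] at h1
    exact Option.some_injective _ h1
  have hRgetE : ∀ m, (hm : m < P.length - j) → R[m]'(by omega) = P[j + m]'(by omega) := by
    intro m hm
    have h1 := hRget m
    rw [List.getElem?_eq_getElem (by omega), List.getElem?_eq_getElem (by omega)] at h1
    exact Option.some_injective _ h1
  have hQpath : IsDiPath A x y Q := by
    refine ⟨⟨hchain.infix hQinf, ?_, ?_⟩, hnd.sublist hQinf.sublist⟩
    · rw [List.head?_eq_getElem?, hQget 0 (by omega)]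
      simpa [List.getElem?_eq_getElem hiL] using congrArg some hgi
    · rw [List.getLast?_eq_getElem?, hQlen]
      simp only [Nat.add_sub_cancel]
      rw [hQget (j - i) (by omega)]
      have hij : i + (j - i) = j := by omega
      rw [hij, List.getElem?_eq_getElem hjL, hgj]
  have hQgeq : InGeq A s p Q := by
    intro a ha
    obtain ⟨m, hm, hma⟩ := List.mem_iff_getElem.1 ha
    rw [hQlen] at hm
    rw [hQgetE m hm] at hma
    rw [← hma]
    exact key (i + m) (by omega) (by omega)
  have hRpath : IsDiPath A y t R := by
    refine ⟨⟨hchain.infix hRinf, ?_, ?_⟩, hnd.sublist hRinf.sublist⟩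
    · rw [List.head?_eq_getElem?, hRget 0]
      simpa [List.getElem?_eq_getElem hjL] using congrArg some hgj
    · rw [List.getLast?_eq_getElem?, hRlen]
      rw [hRget (P.length - j - 1)]
      have hj2 : j + (P.length - j - 1) = P.length - 1 := by omega
      rw [hj2, ← List.getLast?_eq_getElem?, hlast]
  have hRgeq : InGeq A s p R := by
    intro a ha
    obtain ⟨m, hm, hma⟩ := List.mem_iff_getElem.1 ha
    rw [hRlen] at hm
    rw [hRgetE m hm] at hma
    rw [← hma]
    exact key (j + m) (by omega) (by omega)
  -- internal vertices index computations
  have hmemQ : ∀ a, a ∈ Q → ∃ m, ∃ h : i + m ≤ j, P[i + m]'(h.trans_lt hjL) = a := by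
    intro a ha
    obtain ⟨m, hm, hma⟩ := List.mem_iff_getElem.1 ha
    rw [hQlen] at hm
    exact ⟨m, by omega, by rw [← hQgetE m hm]; exact hma⟩
  have hmemR : ∀ a, a ∈ R → ∃ m, ∃ h : j + m < P.length, P[j + m]'h = a := by
    intro a ha
    obtain ⟨m, hm, hma⟩ := List.mem_iff_getElem.1 ha
    rw [hRlen] at hm
    exact ⟨m, by omega, by rw [← hRgetE m (by omega)]; exact hma⟩
  have hIntQ : ∀ a, a ∈ internalVerts Q →
      ∃ m, ∃ h : m < P.length, i < m ∧ m < j ∧ P[m]'h = a := by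
    intro a ha
    obtain ⟨m, hm, hma⟩ := List.mem_iff_getElem.1 ha
    have hlen2 : (internalVerts Q).length = j - i - 1 := by
      simp only [internalVerts, List.length_dropLast, List.length_tail, hQlen]
      omega
    have hm' : m < j - i - 1 := hlen2 ▸ hm
    have h1 : (internalVerts Q)[m]? = some a := by
      rw [List.getElem?_eq_getElem hm]; exact congrArg some hma
    rw [internalVerts, List.getElem?_dropLast] at h1
    have hc : m < Q.tail.length - 1 := by rw [List.length_tail, hQlen]; omega
    rw [if_pos hc, List.getElem?_tail, hQget (m + 1) (by omega)] at h1
    rw [List.getElem?_eq_getElem (by omega : i + (m + 1) < P.length)] at h1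
    refine ⟨i + (m + 1), by omega, by omega, by omega, Option.some_injective _ h1⟩
  have hIntR : ∀ a, a ∈ internalVerts R →
      ∃ m, ∃ h : m < P.length, j < m ∧ P[m]'h = a := by
    intro a ha
    obtain ⟨m, hm, hma⟩ := List.mem_iff_getElem.1 ha
    have hlen2 : (internalVerts R).length = P.length - j - 2 := by
      simp only [internalVerts, List.length_dropLast, List.length_tail, hRlen]
      omega
    have hm' : m < P.length - j - 2 := hlen2 ▸ hm
    have h1 : (internalVerts R)[m]? = some a := by
      rw [List.getElem?_eq_getElem hm]; exact congrArg some hma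
    rw [internalVerts, List.getElem?_dropLast] at h1
    have hc : m < R.tail.length - 1 := by rw [List.length_tail, hRlen]; omega
    rw [if_pos hc, List.getElem?_tail, hRget (m + 1)] at h1
    rw [List.getElem?_eq_getElem (by omega : j + (m + 1) < P.length)] at h1
    refine ⟨j + (m + 1), by omega, by omega, Option.some_injective _ h1⟩
  refine ⟨hxney, hQpath, hQgeq, hRpath, hRgeq, ?_, ?_⟩
  · intro a ha haR
    obtain ⟨m, hmL, him, hmj, hma⟩ := hIntQ a ha
    obtain ⟨r, hr, hra⟩ := hmemR a haR
    have hne : P[m]'hmL ≠ P[j + r]'hr := nodup_getElem_ne hnd hmL hr (by omega)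
    exact hne (hma.trans hra.symm)
  · intro a ha haQ
    obtain ⟨m, hmL, hjm, hma⟩ := hIntR a ha
    obtain ⟨r, hr, hra⟩ := hmemQ a haQ
    have hne : P[m]'hmL ≠ P[i + r]'(hr.trans_lt hjL) :=
      nodup_getElem_ne hnd hmL (hr.trans_lt hjL) (by omega)
    exact hne (hma.trans hra.symm)
end
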